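/- Let (i,j) be a pair of distinct vertices with w_ij < w̄ and δ ∈ (0, w̄ − w_ij]. Then adding weight δ to edge (i,j) strictly reduces polarization, i.e., P(z⁺) < P(z), if and only if −∂_{w_ij}P(L) > (z_i − z_j)²·(v_ijᵀ(I+L)^{-2}v_ij)/(δ^{-1} + v_ijᵀ(I+L)^{-1}v_ij), where ∂_{w_ij}P(L) = −2·z̃ᵀ(I+L)^{-1}·L_ij·z̃. -/

import Mathlib

open Matrix Finset

noncomputable def deg {n : ℕ} (W : Matrix (Fin n) (Fin n) ℝ) (i : Fin n) : ℝ := ∑ j, W i j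

noncomputable def lap {n : ℕ} (W : Matrix (Fin n) (Fin n) ℝ) : Matrix (Fin n) (Fin n) ℝ :=
  Matrix.diagonal (deg W) - W

noncomputable def mean {n : ℕ} (x : Fin n → ℝ) : ℝ := (∑ i, x i) / n

noncomputable def ctr {n : ℕ} (x : Fin n → ℝ) : Fin n → ℝ := fun i => x i - mean x

noncomputable def pol {n : ℕ} (x : Fin n → ℝ) : ℝ := ∑ i, (x i - mean x) ^ 2

def vij {n : ℕ} (i j : Fin n) : Fin n → ℝ :=
  fun k => (if k = i then (1 : ℝ) else 0) - (if k = j then (1 : ℝ) else 0)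

lemma vij_dot {n : ℕ} (i j : Fin n) (x : Fin n → ℝ) :
    vij i j ⬝ᵥ x = x i - x j := by
  simp [vij, dotProduct, sub_mul, ite_mul, Finset.sum_sub_distrib]

lemma vecMulVec_mulVec' {n : ℕ} (u v x : Fin n → ℝ) :
    vecMulVec u v *ᵥ x = (v ⬝ᵥ x) • u := by
  ext k
  simp [vecMulVec_apply, mulVec, dotProduct, Finset.mul_sum, mul_comm, mul_assoc, mul_left_comm]

lemma lap_quad {n : ℕ} (W : Matrix (Fin n) (Fin n) ℝ) (hsymm : W.IsSymm)
    (hW : ∀ i j, 0 ≤ W i j) (x : Fin n → ℝ) :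
    0 ≤ x ⬝ᵥ (lap W *ᵥ x) := by
  have e1 : x ⬝ᵥ (lap W *ᵥ x) = ∑ a, ∑ b, (W a b * (x a * x a) - W a b * (x a * x b)) := by
    simp only [dotProduct, mulVec]
    refine Finset.sum_congr rfl fun a _ => ?_
    have h1 : ∑ b, lap W a b * x b = deg W a * x a - ∑ b, W a b * x b := by
      simp [lap, Matrix.sub_apply, Matrix.diagonal_apply, ite_mul, sub_mul,
        Finset.sum_sub_distrib]
    rw [h1, deg, mul_sub, Finset.sum_mul, Finset.mul_sum, Finset.mul_sum,
      Finset.sum_sub_distrib]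
    congr 1 <;> exact Finset.sum_congr rfl fun b _ => by ring
  have hsum : ∑ a, ∑ b, W a b * (x b * x b) = ∑ a, ∑ b, W a b * (x a * x a) := by
    rw [Finset.sum_comm]
    exact Finset.sum_congr rfl fun b _ => Finset.sum_congr rfl fun a _ => by
      rw [hsymm.apply a b]
  have e2 : (2:ℝ) * (x ⬝ᵥ (lap W *ᵥ x)) = ∑ a, ∑ b, W a b * (x a - x b)^2 := by
    rw [e1]
    have : ∀ a b : Fin n, W a b * (x a - x b)^2 =
        (W a b * (x a * x a) - W a b * (x a * x b)) +
        ((W a b * (x b * x b)) - W a b * (x a * x b)) := fun a b => by ring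
    simp only [this, Finset.sum_add_distrib, Finset.sum_sub_distrib, hsum]
    ring
  nlinarith [Finset.sum_nonneg (fun a (_ : a ∈ Finset.univ) =>
    Finset.sum_nonneg (fun b (_ : b ∈ Finset.univ) =>
      mul_nonneg (hW a b) (sq_nonneg (x a - x b))))]

lemma lap_isSymm {n : ℕ} (W : Matrix (Fin n) (Fin n) ℝ) (hsymm : W.IsSymm) :
    (lap W)ᵀ = lap W := by
  rw [lap, Matrix.transpose_sub, Matrix.diagonal_transpose, hsymm]

lemma dotProduct_self_pos' {n : ℕ} {x : Fin n → ℝ} (hx : x ≠ 0) : 0 < x ⬝ᵥ x := by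
  rcases lt_or_eq_of_le (Finset.sum_nonneg fun k _ => mul_self_nonneg (x k) :
      (0:ℝ) ≤ x ⬝ᵥ x) with h | h
  · exact h
  · exact absurd (dotProduct_self_eq_zero.mp h.symm) hx

/-- adding weight `δ` to the edge `(i,j)` strictly reduces polarization
if and only if
`-∂_{w_ij}P(L) > (z_i - z_j)² (v_ijᵀ(I+L)⁻²v_ij) / (δ⁻¹ + v_ijᵀ(I+L)⁻¹v_ij)`. -/
theorem stmt_8 {n : ℕ} (hn : 2 ≤ n) (wbar : ℝ) (hwbar : 0 < wbar)
    (W : Matrix (Fin n) (Fin n) ℝ)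
    (hsymm : W.IsSymm) (hdiag : ∀ i, W i i = 0)
    (hW : ∀ i j, 0 ≤ W i j ∧ W i j ≤ wbar)
    (s : Fin n → ℝ) (i j : Fin n) (hij : i ≠ j)
    (hwij : W i j < wbar)
    (δ : ℝ) (hδ0 : 0 < δ) (hδ : δ ≤ wbar - W i j)
    (z zp : Fin n → ℝ)
    (hz : z = (1 + lap W)⁻¹ *ᵥ s)
    (hzp : zp = (1 + (lap W + δ • vecMulVec (vij i j) (vij i j)))⁻¹ *ᵥ s) :
    pol zp < pol z ↔
      -(-2 * (ctr z ⬝ᵥ ((1 + lap W)⁻¹ *ᵥ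
          (vecMulVec (vij i j) (vij i j) *ᵥ ctr z)))) >
        (z i - z j) ^ 2 * (vij i j ⬝ᵥ (((1 + lap W)⁻¹ * (1 + lap W)⁻¹) *ᵥ vij i j)) /
          (δ⁻¹ + vij i j ⬝ᵥ ((1 + lap W)⁻¹ *ᵥ vij i j)) := by
  have hWnn : ∀ a b, 0 ≤ W a b := fun a b => (hW a b).1
  set v : Fin n → ℝ := vij i j with hvdef
  set M : Matrix (Fin n) (Fin n) ℝ := vecMulVec v v with hMdef
  set A : Matrix (Fin n) (Fin n) ℝ := 1 + lap W with hAdef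
  have hvne : v ≠ 0 := by
    intro h
    have := congrFun h i
    simp [hvdef, vij, hij] at this
  have hAT : Aᵀ = A := by
    rw [hAdef, Matrix.transpose_add, Matrix.transpose_one, lap_isSymm W hsymm]
  have hApd : A.PosDef := by
    refine posDef_iff_dotProduct_mulVec.mpr ⟨?_, ?_⟩
    · show Aᴴ = A
      rw [Matrix.conjTranspose_eq_transpose_of_trivial, hAT]
    · intro x hx
      have h1 : star x = x := by simp
      rw [h1, hAdef, Matrix.add_mulVec, Matrix.one_mulVec, dotProduct_add]
      have := lap_quad W hsymm hWnn x
      have := dotProduct_self_pos' hx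
      linarith
  have hMT : Mᵀ = M := by
    rw [hMdef]
    ext a b
    simp [Matrix.transpose_apply, vecMulVec_apply, mul_comm]
  have hBpd : (A + δ • M).PosDef := by
    refine posDef_iff_dotProduct_mulVec.mpr ⟨?_, ?_⟩
    · show (A + δ • M)ᴴ = A + δ • M
      rw [Matrix.conjTranspose_eq_transpose_of_trivial, Matrix.transpose_add,
        Matrix.transpose_smul, hAT, hMT]
    · intro x hx
      have h1 : star x = x := by simp
      rw [h1, Matrix.add_mulVec, dotProduct_add, Matrix.smul_mulVec,
        hMdef, vecMulVec_mulVec', dotProduct_smul, dotProduct_smul]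
      have h2 := hApd.dotProduct_mulVec_pos hx
      rw [show star x = x by simp] at h2
      have h3 : x ⬝ᵥ v = v ⬝ᵥ x := dotProduct_comm x v
      have h4 : (0:ℝ) ≤ δ * ((v ⬝ᵥ x) * (v ⬝ᵥ x)) :=
        mul_nonneg hδ0.le (mul_self_nonneg _)
      simp only [smul_eq_mul, h3]
      nlinarith
  haveI instA : Invertible A := hApd.isUnit.invertible
  haveI instB : Invertible (A + δ • M) := hBpd.isUnit.invertible
  have hAz : A *ᵥ z = s := by
    rw [hz, mulVec_mulVec, Matrix.mul_inv_of_invertible, one_mulVec]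
  set u : Fin n → ℝ := A⁻¹ *ᵥ v with hudef
  have hAu : A *ᵥ u = v := by
    rw [hudef, mulVec_mulVec, Matrix.mul_inv_of_invertible, one_mulVec]
  have hAiT : (A⁻¹)ᵀ = A⁻¹ := by rw [Matrix.transpose_nonsing_inv, hAT]
  have hswap : ∀ x y : Fin n → ℝ, x ⬝ᵥ (A⁻¹ *ᵥ y) = (A⁻¹ *ᵥ x) ⬝ᵥ y := by
    intro x y
    rw [dotProduct_mulVec, ← hAiT, vecMul_transpose, hAiT]
  have hA1 : A *ᵥ (fun _ => (1:ℝ)) = fun _ => 1 := by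
    ext a
    have h1 : ∑ b, lap W a b = 0 := by
      simp [lap, Matrix.sub_apply, Matrix.diagonal_apply, Finset.sum_sub_distrib, deg]
    simp [hAdef, Matrix.add_mulVec, Matrix.one_mulVec, mulVec, dotProduct,
      Matrix.add_apply, Matrix.one_apply, Finset.sum_add_distrib, h1]
  have hAi1 : A⁻¹ *ᵥ (fun _ => (1:ℝ)) = fun _ => 1 :=
    Matrix.inv_mulVec_eq_vec hA1.symm
  have hsumv : ∑ k, v k = 0 := by
    simp [hvdef, vij, Finset.sum_sub_distrib]
  have hsumu : ∑ k, u k = 0 := by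
    have h1 : (fun _ => (1:ℝ)) ⬝ᵥ u = ∑ k, u k := by simp [dotProduct]
    have h2 : (fun _ => (1:ℝ)) ⬝ᵥ u = ∑ k, v k := by
      rw [hudef, hswap, hAi1]; simp [dotProduct]
    rw [← h1, h2, hsumv]
  set d : ℝ := z i - z j with hddef
  set q1 : ℝ := v ⬝ᵥ u with hq1def
  set Q2 : ℝ := u ⬝ᵥ u with hQ2def
  set E : ℝ := ctr z ⬝ᵥ u with hEdef
  have hq1pos : 0 < q1 := by
    have h1 := (hApd.inv).dotProduct_mulVec_pos hvne
    rw [show star v = v by simp] at h1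
    exact h1
  set r : ℝ := δ⁻¹ + q1 with hrdef
  have hr : 0 < r := add_pos (inv_pos.2 hδ0) hq1pos
  obtain ⟨c, hcr⟩ : ∃ c : ℝ, c * r = d := ⟨d / r, div_mul_cancel₀ d hr.ne'⟩
  -- zp = z - c • u
  have hvz : v ⬝ᵥ z = d := by rw [hvdef, vij_dot]
  have hscalar : δ * ((v ⬝ᵥ z) - c * (v ⬝ᵥ u)) - c = 0 := by
    have h2 : c * (δ⁻¹ + (v ⬝ᵥ u)) = v ⬝ᵥ z := by rw [hvz, ← hrdef]; exact hcr
    have h3 : δ * δ⁻¹ = 1 := mul_inv_cancel₀ hδ0.ne'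
    linear_combination (-δ) * h2 + c * h3
  have hBz : (A + δ • M) *ᵥ (z - c • u) = s := by
    have expand : (A + δ • M) *ᵥ (z - c • u) =
        s + (δ * ((v ⬝ᵥ z) - c * (v ⬝ᵥ u)) - c) • v := by
      rw [Matrix.add_mulVec, Matrix.mulVec_sub, hAz, Matrix.mulVec_smul, hAu,
        Matrix.smul_mulVec, hMdef, vecMulVec_mulVec', dotProduct_sub,
        dotProduct_smul]
      ext k
      simp only [Pi.add_apply, Pi.sub_apply, Pi.smul_apply, smul_eq_mul]
      ring
    rw [expand, hscalar]
    ext k; simp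
  have hzp' : zp = z - c • u := by
    rw [hzp, show 1 + (lap W + δ • vecMulVec (vij i j) (vij i j)) = A + δ • M by
      rw [hAdef, hMdef, hvdef, add_assoc]]
    exact Matrix.inv_mulVec_eq_vec hBz.symm
  -- mean and pol
  have hmean : mean zp = mean z := by
    rw [hzp', mean, mean]
    congr 1
    simp [Finset.sum_sub_distrib, ← Finset.mul_sum, hsumu]
  have hE' : E = ∑ k, (z k - mean z) * u k := by
    simp [hEdef, dotProduct, ctr]
  have hQ2' : Q2 = ∑ k, u k * u k := by simp [hQ2def, dotProduct]
  have hpol : pol zp = pol z - 2*c*E + c^2*Q2 := by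
    rw [pol, pol, hmean, hE', hQ2']
    have h1 : ∀ k, (zp k - mean z)^2 =
        (z k - mean z)^2 - 2*c*((z k - mean z) * u k) + c^2*(u k * u k) := by
      intro k
      rw [hzp']
      simp only [Pi.sub_apply, Pi.smul_apply, smul_eq_mul]
      ring
    simp only [h1, Finset.sum_add_distrib, Finset.sum_sub_distrib, ← Finset.mul_sum]
  -- rewrite the RHS quantities
  have hlhs : ctr z ⬝ᵥ (A⁻¹ *ᵥ (M *ᵥ ctr z)) = d * E := by
    have h1 : v ⬝ᵥ ctr z = d := by
      rw [hvdef, vij_dot]; simp [ctr, hddef]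
    rw [hMdef, vecMulVec_mulVec', h1, Matrix.mulVec_smul, dotProduct_smul, ← hudef,
      smul_eq_mul, hEdef]
  have hq2eq : v ⬝ᵥ ((A⁻¹ * A⁻¹) *ᵥ v) = Q2 := by
    rw [← mulVec_mulVec, ← hudef, hswap, ← hudef, hQ2def]
  clear_value d q1 Q2 E r
  rw [hlhs, hq2eq, hpol]
  rw [gt_iff_lt, div_lt_iff₀ hr, ← hcr]
  constructor
  · intro h
    have h1 : c^2*Q2 < 2*c*E := by linarith
    nlinarith [mul_pos (sub_pos.2 h1) (mul_pos hr hr)]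
  · intro h
    have h1 : c^2*Q2 < 2*c*E := by nlinarith [mul_pos hr hr]
    linarith
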